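/- The denotation of a program space system (regular tree equations over Empty, Union, Lit, and constructor nodes) is a regular tree language, and conversely every regular tree language arises as the denotation of some program space system. -/

import Mathlib

/-- Finite trees over a ranked alphabet `Sym` (with arity function `arity`),
whose leaves carry strings over `σ`. -/
inductive RkTree (Sym σ : Type) (arity : Sym → ℕ) : Type
  | leaf (w : List σ)
  | node (s : Sym) (children : Fin (arity s) → RkTree Sym σ arity)

/-- Right-hand sides of program space equations over variables `V`. -/
inductive RkRhs (V Sym σ : Type) (arity : Sym → ℕ) : Type
  | empty
  | union (vars : List V)
  | lit (R : Language σ)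
  | node (s : Sym) (args : Fin (arity s) → V)

/-- A program space system: finitely many variables, one equation each. -/
structure RkSystem (Sym σ : Type) (arity : Sym → ℕ) where
  V : Type
  [finV : Fintype V]
  rhs : V → RkRhs V Sym σ arity

/-- The denotation of a program space system, as the least solution of the set
equations (an inductive predicate is exactly the least fixpoint). -/
inductive RkSystem.Derives {Sym σ : Type} {arity : Sym → ℕ}
    (S : RkSystem Sym σ arity) : S.V → RkTree Sym σ arity → Prop
  | lit {i : S.V} {R : Language σ} {w : List σ} :
      S.rhs i = .lit R → w ∈ R → RkSystem.Derives S i (.leaf w)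
  | union {i : S.V} {vars : List S.V} {j : S.V} {t : RkTree Sym σ arity} :
      S.rhs i = .union vars → j ∈ vars → RkSystem.Derives S j t →
      RkSystem.Derives S i t
  | node {i : S.V} {s : Sym} {args : Fin (arity s) → S.V}
      {ts : Fin (arity s) → RkTree Sym σ arity} :
      S.rhs i = .node s args →
      (∀ j : Fin (arity s), RkSystem.Derives S (args j) (ts j)) →
      RkSystem.Derives S i (.node s ts)

/-- A system all of whose leaf languages are regular string languages. -/
def RkSystem.Regular {Sym σ : Type} {arity : Sym → ℕ}
    (S : RkSystem Sym σ arity) : Prop :=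
  ∀ (i : S.V) (R : Language σ), S.rhs i = .lit R → R.IsRegular

/-- A nondeterministic (bottom-up) finite tree automaton over the ranked
alphabet `Sym`, with leaves carrying strings from regular string languages. -/
structure RkNTA (Sym σ : Type) (arity : Sym → ℕ) where
  Q : Type
  [finQ : Fintype Q]
  leafLang : Q → Language σ
  leafReg : ∀ q : Q, (leafLang q).IsRegular
  trans : (s : Sym) → (Fin (arity s) → Q) → Q → Prop
  final : Set Q

/-- Runs of a tree automaton. -/
inductive RkNTA.Run {Sym σ : Type} {arity : Sym → ℕ} (A : RkNTA Sym σ arity) :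
    A.Q → RkTree Sym σ arity → Prop
  | leaf {q : A.Q} {w : List σ} : w ∈ A.leafLang q → RkNTA.Run A q (.leaf w)
  | node {q : A.Q} {s : Sym} {qs : Fin (arity s) → A.Q}
      {ts : Fin (arity s) → RkTree Sym σ arity} :
      A.trans s qs q → (∀ j : Fin (arity s), RkNTA.Run A (qs j) (ts j)) →
      RkNTA.Run A q (.node s ts)

/-- The tree language accepted by a tree automaton. -/
def RkNTA.lang {Sym σ : Type} {arity : Sym → ℕ} (A : RkNTA Sym σ arity) :
    Set (RkTree Sym σ arity) :=
  {t | ∃ q ∈ A.final, RkNTA.Run A q t}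

/-- Regular tree languages: those recognized by a finite tree automaton. -/
def IsRegularTreeLang {Sym σ : Type} {arity : Sym → ℕ}
    (L : Set (RkTree Sym σ arity)) : Prop :=
  ∃ A : RkNTA Sym σ arity, A.lang = L

/- ## Auxiliary lemmas -/

theorem lang_bot_regular {T : Type} : (⊥ : Language T).IsRegular :=
  ⟨Unit, inferInstance, ⟨fun _ _ => (), (), ∅⟩, by
    ext x
    simp only [DFA.mem_accepts]
    exact iff_of_false (Set.notMem_empty _) (Set.notMem_empty x)⟩

theorem lang_union_regular {T : Type} {L₁ L₂ : Language T}
    (h₁ : L₁.IsRegular) (h₂ : L₂.IsRegular) : (L₁ ⊔ L₂).IsRegular := by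
  obtain ⟨σ₁, _, M₁, rfl⟩ := h₁
  obtain ⟨σ₂, _, M₂, rfl⟩ := h₂
  refine ⟨σ₁ × σ₂, inferInstance,
    ⟨fun p a => (M₁.step p.1 a, M₂.step p.2 a), (M₁.start, M₂.start),
     {p | p.1 ∈ M₁.accept ∨ p.2 ∈ M₂.accept}⟩, ?_⟩
  have key : ∀ (x : List T) (p : σ₁ × σ₂),
      DFA.evalFrom ⟨fun p a => (M₁.step p.1 a, M₂.step p.2 a), (M₁.start, M₂.start),
        {p | p.1 ∈ M₁.accept ∨ p.2 ∈ M₂.accept}⟩ p x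
        = (M₁.evalFrom p.1 x, M₂.evalFrom p.2 x) := by
    intro x
    induction x with
    | nil => intro p; rfl
    | cons a x ih =>
      intro p
      simp only [DFA.evalFrom, List.foldl_cons] at *
      exact ih _
  ext x
  simp only [DFA.mem_accepts, DFA.eval, key, Set.mem_setOf_eq]
  change _ ↔ x ∈ M₁.accepts ∨ x ∈ M₂.accepts
  simp [DFA.mem_accepts, DFA.eval]

theorem lang_sup_regular {T ι : Type} (s : Finset ι) (f : ι → Language T)
    (h : ∀ i ∈ s, (f i).IsRegular) : (s.sup f).IsRegular := by
  induction s using Finset.cons_induction with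
  | empty => simpa using lang_bot_regular
  | cons a s ha ih =>
    rw [Finset.sup_cons]
    exact lang_union_regular (h a (Finset.mem_cons_self a s))
      (ih fun i hi => h i (Finset.mem_cons_of_mem hi))

section Dir1

variable {Sym σ : Type} {arity : Sym → ℕ} (S : RkSystem Sym σ arity)

/-- One union step. -/
def RkStep (i j : S.V) : Prop :=
  ∃ vars, S.rhs i = .union vars ∧ j ∈ vars

theorem derives_of_reach {i j : S.V} {t : RkTree Sym σ arity}
    (h : Relation.ReflTransGen (RkStep S) i j) (hd : S.Derives j t) : S.Derives i t := by
  induction h using Relation.ReflTransGen.head_induction_on with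
  | refl => exact hd
  | head hstep _ ih =>
    obtain ⟨vars, hu, hmem⟩ := hstep
    exact RkSystem.Derives.union hu hmem ih

theorem derives_leaf_aux {i : S.V} {t : RkTree Sym σ arity} (h : S.Derives i t)
    {w : List σ} (ht : t = .leaf w) :
    ∃ j R, Relation.ReflTransGen (RkStep S) i j ∧ S.rhs j = .lit R ∧ w ∈ R := by
  induction h generalizing w with
  | lit hl hw =>
    cases ht
    exact ⟨_, _, Relation.ReflTransGen.refl, hl, hw⟩
  | union hu hmem hd ih =>
    obtain ⟨j, R, hr, hl, hw⟩ := ih ht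
    exact ⟨j, R, Relation.ReflTransGen.head ⟨_, hu, hmem⟩ hr, hl, hw⟩
  | node hn hts ih => cases ht

theorem derives_leaf_iff {i : S.V} {w : List σ} :
    S.Derives i (.leaf w) ↔
      ∃ j R, Relation.ReflTransGen (RkStep S) i j ∧ S.rhs j = .lit R ∧ w ∈ R := by
  constructor
  · intro h
    exact derives_leaf_aux S h rfl
  · rintro ⟨j, R, hr, hl, hw⟩
    exact derives_of_reach S hr (RkSystem.Derives.lit hl hw)

end Dir1

/-- **Program space systems denote exactly the regular tree languages**:
the denotation of each variable of a program space system (with regular leaf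
languages) is a regular tree language, and conversely every regular tree
language is the denotation of some variable of some such system. -/
theorem rkSystem_denotation_regular_iff
    (Sym σ : Type) [Fintype Sym] (arity : Sym → ℕ) :
    (∀ (S : RkSystem Sym σ arity), S.Regular → ∀ i : S.V,
      IsRegularTreeLang {t | S.Derives i t}) ∧
    (∀ L : Set (RkTree Sym σ arity), IsRegularTreeLang L →
      ∃ (S : RkSystem Sym σ arity) (_ : S.Regular) (i : S.V),
        {t | S.Derives i t} = L) := by
  constructor
  · -- systems denote regular tree languages
    intro S hreg i
    classical
    letI : Fintype S.V := S.finV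
    -- the literal language attached to a variable
    set litL : S.V → Language σ := fun j =>
      match S.rhs j with
      | .lit R => R
      | _ => ⊥ with hlitL
    have hlit_reg : ∀ j, (litL j).IsRegular := by
      intro j
      simp only [hlitL]
      rcases h : S.rhs j with _ | _ | R | _
      all_goals simp only [h]
      · exact lang_bot_regular
      · exact lang_bot_regular
      · exact hreg j R h
      · exact lang_bot_regular
    set leafL : S.V → Language σ := fun q => {w | S.Derives q (.leaf w)} with hleafL
    have hleaf_reg : ∀ q, (leafL q).IsRegular := by
      intro q
      have heq : leafL q
          = (Finset.univ.filter (fun j => Relation.ReflTransGen (RkStep S) q j)).sup litL := by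
        ext w
        simp only [Finset.sup_eq_iSup, Language.mem_iSup]
        constructor
        · intro hw
          obtain ⟨j, R, hr, hl, hwR⟩ := (derives_leaf_iff S).1 hw
          refine ⟨j, by simp [hr], ?_⟩
          simp [hlitL, hl, hwR]
        · rintro ⟨j, hj, hw⟩
          simp only [Finset.mem_filter] at hj
          simp only [hlitL] at hw
          rcases h : S.rhs j with _ | _ | R | _ <;> rw [h] at hw
          · exact absurd hw (Set.notMem_empty w)
          · exact absurd hw (Set.notMem_empty w)
          · exact (derives_leaf_iff S).2 ⟨j, R, hj.2, h, hw⟩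
          · exact absurd hw (Set.notMem_empty w)
      rw [heq]
      exact lang_sup_regular _ _ (fun j _ => hlit_reg j)
    set A : RkNTA Sym σ arity := ⟨S.V, leafL, hleaf_reg,
        fun s qs q => ∃ j args, Relation.ReflTransGen (RkStep S) q j ∧
          S.rhs j = .node s args ∧ qs = args, {i}⟩ with hA
    refine ⟨A, ?_⟩
    · -- the accepted language is the denotation
      have runiff : ∀ q t, A.Run q t ↔ S.Derives q t := by
        intro q t
        constructor
        · intro h
          induction h with
          | leaf hw => exact hw
          | node htr _ ih =>
            obtain ⟨j, args, hr, hn, hqs⟩ := htr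
            subst hqs
            exact derives_of_reach S hr (RkSystem.Derives.node hn ih)
        · intro h
          induction h with
          | lit hl hw => exact RkNTA.Run.leaf (RkSystem.Derives.lit hl hw)
          | union hu hmem _ ih =>
            match ih with
            | .leaf hw =>
              exact RkNTA.Run.leaf (RkSystem.Derives.union hu hmem hw)
            | .node htr hrun =>
              obtain ⟨j', args, hr, hn, hqs⟩ := htr
              exact RkNTA.Run.node
                ⟨j', args, Relation.ReflTransGen.head ⟨_, hu, hmem⟩ hr, hn, hqs⟩ hrun
          | node hn _ ih =>
            exact RkNTA.Run.node ⟨_, _, Relation.ReflTransGen.refl, hn, rfl⟩ ih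
      ext t
      constructor
      · rintro ⟨q, hq, h⟩
        have hq' : q = i := hq
        exact (runiff i t).1 (hq' ▸ h)
      · intro h
        exact ⟨i, rfl, (runiff i t).2 h⟩
  · -- regular tree languages are denotations
    rintro L ⟨A, rfl⟩
    classical
    letI : Fintype A.Q := A.finQ
    letI : DecidableEq Sym := Classical.decEq _
    set T := (s : Sym) × (Fin (arity s) → A.Q) with hT
    set V := Option (A.Q ⊕ A.Q ⊕ T) with hV
    set rhs : V → RkRhs V Sym σ arity := fun v =>
      match v with
      | none => .union ((Finset.univ.filter (fun q => q ∈ A.final)).toList.map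
          (fun q => some (.inl q)))
      | some (.inl q) => .union (some (.inr (.inl q)) ::
          (Finset.univ.filter (fun p : T => A.trans p.1 p.2 q)).toList.map
            (fun p => some (.inr (.inr p))))
      | some (.inr (.inl q)) => .lit (A.leafLang q)
      | some (.inr (.inr p)) => .node p.1 (fun k => some (.inl (p.2 k)))
      with hrhs
    set S : RkSystem Sym σ arity := ⟨V, rhs⟩ with hS
    have hSreg : S.Regular := by
      rintro (_ | q | q | p) R h
      · cases h
      · cases h
      · cases h
        exact A.leafReg q
      · cases h
    refine ⟨S, hSreg, none, ?_⟩
    -- semantics of each variable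
    set Sem : V → Set (RkTree Sym σ arity) := fun v =>
      match v with
      | none => A.lang
      | some (.inl q) => {t | A.Run q t}
      | some (.inr (.inl q)) => {t | ∃ w, t = .leaf w ∧ w ∈ A.leafLang q}
      | some (.inr (.inr p)) =>
          {t | ∃ ts, t = .node p.1 ts ∧ ∀ k, A.Run (p.2 k) (ts k)}
      with hSem
    have fwd : ∀ v t, S.Derives v t → t ∈ Sem v := by
      intro v t h
      induction h with
      | @lit i R w hl hw =>
        match i, hl with
        | some (.inr (.inl q)), hl =>
          cases hl
          exact ⟨w, rfl, hw⟩
      | @union i vars j t hu hmem _ ih =>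
        match i, hu with
        | none, hu =>
          cases hu
          simp only [List.mem_map, Finset.mem_toList, Finset.mem_filter] at hmem
          obtain ⟨q, ⟨_, hq⟩, rfl⟩ := hmem
          exact ⟨q, hq, ih⟩
        | some (.inl q), hu =>
          cases hu
          rcases List.mem_cons.1 hmem with rfl | hmem
          · obtain ⟨w, rfl, hw⟩ := ih
            exact RkNTA.Run.leaf hw
          · simp only [List.mem_map, Finset.mem_toList, Finset.mem_filter] at hmem
            obtain ⟨p, ⟨_, hp⟩, rfl⟩ := hmem
            obtain ⟨ts, rfl, hts⟩ := ih
            exact RkNTA.Run.node hp hts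
      | @node i s args ts hn hts ih =>
        match i, hn with
        | some (.inr (.inr p)), hn =>
          injection hn with h1 h2
          subst h1
          cases eq_of_heq h2
          exact ⟨ts, rfl, fun k => ih k⟩
    have bwd : ∀ q t, A.Run q t → S.Derives (some (.inl q)) t := by
      intro q t h
      induction h with
      | @leaf q w hw =>
        exact RkSystem.Derives.union rfl List.mem_cons_self
          (RkSystem.Derives.lit rfl hw)
      | @node q s qs ts htr _ ih =>
        refine RkSystem.Derives.union (j := some (.inr (.inr ⟨s, qs⟩))) rfl
          (List.mem_cons_of_mem _ ?_)
          (RkSystem.Derives.node (args := fun k => some (.inl ((⟨s, qs⟩ : T).2 k))) rfl ih)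
        simp only [List.mem_map, Finset.mem_toList, Finset.mem_filter]
        exact ⟨⟨s, qs⟩, ⟨Finset.mem_univ _, htr⟩, rfl⟩
    ext t
    constructor
    · intro h
      exact fwd none t h
    · rintro ⟨q, hq, hrun⟩
      refine RkSystem.Derives.union (vars :=
        ((Finset.univ.filter (fun q => q ∈ A.final)).toList.map (fun q => some (.inl q))))
        rfl ?_ (bwd q t hrun)
      simp only [List.mem_map, Finset.mem_toList, Finset.mem_filter]
      exact ⟨q, ⟨Finset.mem_univ _, hq⟩, rfl⟩
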